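/- Let E, F be real Banach spaces and let m, n be natural numbers with m > 0 or n > 0. If T₀ ∈ B(E,F) has dim ker T₀ = m (finite), range T₀ closed, and dim (F / range T₀) = n (finite), then the equivalence class T̃₀ = { T ∈ B(E,F) : T double splitting and T₀ ≈ T } (for the common-complement chain relation ≈) equals Φ_{m,n} = { T ∈ B(E,F) : dim ker T = m, range T closed, dim (F / range T) = n }. -/

import Mathlib

open Module Submodule

section Alg
variable {V : Type*} [AddCommGroup V] [Module ℝ V]

/-- Core induction: two finite-dimensional subspaces of the same dimension have a
common complement inside their sup. -/
lemma exists_common_complement_core (k : ℕ) :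
    ∀ (M M' : Submodule ℝ V), FiniteDimensional ℝ M → FiniteDimensional ℝ M' →
      finrank ℝ M = finrank ℝ M' →
      finrank ℝ ↥(M ⊔ M') = finrank ℝ M + k →
      ∃ D : Submodule ℝ V, M ⊓ D = ⊥ ∧ M ⊔ D = M ⊔ M' ∧ M' ⊓ D = ⊥ ∧ M' ⊔ D = M ⊔ M' := by
  induction k with
  | zero =>
    intro M M' hM hM' hrk hsup
    haveI := hM; haveI := hM'
    have h1' : M ⊔ M' = M :=
      (Submodule.eq_of_le_of_finrank_le (le_sup_left : M ≤ M ⊔ M') (by omega)).symm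
    have h2' : M ⊔ M' = M' :=
      (Submodule.eq_of_le_of_finrank_le (le_sup_right : M' ≤ M ⊔ M') (by omega)).symm
    exact ⟨⊥, by simp, by simp [h1'], by simp, by simp [h2']⟩
  | succ k ih =>
    intro M M' hM hM' hrk hsup
    haveI := hM; haveI := hM'
    have hM'notle : ¬ M' ≤ M := by
      intro h
      rw [sup_eq_left.2 h] at hsup; omega
    have hMnotle : ¬ M ≤ M' := by
      intro h
      rw [sup_eq_right.2 h] at hsup; omega
    obtain ⟨x, hxM', hxM⟩ := SetLike.not_le_iff_exists.1 hM'notle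
    obtain ⟨y, hyM, hyM'⟩ := SetLike.not_le_iff_exists.1 hMnotle
    set v := x + y with hv
    have hv1 : v ∈ M ⊔ M' := add_mem (Submodule.mem_sup_right hxM') (Submodule.mem_sup_left hyM)
    have hvM : v ∉ M := by
      intro h
      have h2 := sub_mem h hyM
      rw [hv, add_sub_cancel_right] at h2
      exact hxM h2
    have hvM' : v ∉ M' := by
      intro h
      have h2 := sub_mem h hxM'
      rw [hv, add_sub_cancel_left] at h2
      exact hyM' h2
    have hv0 : v ≠ 0 := fun h => hvM (h ▸ zero_mem M)
    have hdMv : Disjoint M (span ℝ {v}) := (disjoint_span_singleton' hv0).2 hvM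
    have hdM'v : Disjoint M' (span ℝ {v}) := (disjoint_span_singleton' hv0).2 hvM'
    have hspan : span ℝ {v} ≤ M ⊔ M' := Submodule.span_le.2 (by simpa using hv1)
    set M₁ := M ⊔ span ℝ {v} with hM₁def
    set M₁' := M' ⊔ span ℝ {v} with hM₁'def
    have hrk1 : finrank ℝ M₁ = finrank ℝ M + 1 := by
      have h := Submodule.finrank_sup_add_finrank_inf_eq M (span ℝ {v})
      rw [hdMv.eq_bot, finrank_bot, finrank_span_singleton hv0, ← hM₁def] at h
      omega
    have hrk1' : finrank ℝ M₁' = finrank ℝ M' + 1 := by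
      have h := Submodule.finrank_sup_add_finrank_inf_eq M' (span ℝ {v})
      rw [hdM'v.eq_bot, finrank_bot, finrank_span_singleton hv0, ← hM₁'def] at h
      omega
    have hsupeq : M₁ ⊔ M₁' = M ⊔ M' :=
      le_antisymm (sup_le (sup_le le_sup_left hspan) (sup_le le_sup_right hspan))
        (sup_le_sup le_sup_left le_sup_left)
    obtain ⟨D', hd1, hd2, hd3, hd4⟩ := ih M₁ M₁' inferInstance inferInstance
      (by omega) (by rw [hsupeq]; omega)
    refine ⟨D' ⊔ span ℝ {v}, ?_, ?_, ?_, ?_⟩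
    · rw [eq_bot_iff]
      rintro z hz
      rw [Submodule.mem_inf] at hz
      obtain ⟨hzM, hzD⟩ := hz
      obtain ⟨d, hd, s, hs, hds⟩ := Submodule.mem_sup.1 hzD
      have hdM₁ : d ∈ M₁ := by
        have : d = z - s := by rw [← hds, add_sub_cancel_right]
        rw [this]
        exact sub_mem (Submodule.mem_sup_left hzM) (Submodule.mem_sup_right hs)
      have hd0 : d = 0 := by
        have : d ∈ M₁ ⊓ D' := Submodule.mem_inf.2 ⟨hdM₁, hd⟩
        rwa [hd1, Submodule.mem_bot] at this
      have : z ∈ M ⊓ span ℝ {v} := Submodule.mem_inf.2 ⟨hzM, by rw [← hds, hd0, zero_add]; exact hs⟩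
      rwa [hdMv.eq_bot, Submodule.mem_bot] at this
    · calc M ⊔ (D' ⊔ span ℝ {v}) = (M ⊔ span ℝ {v}) ⊔ D' := by
            rw [sup_comm D' (span ℝ {v}), ← sup_assoc]
        _ = M ⊔ M' := by rw [← hM₁def, hd2, hsupeq]
    · rw [eq_bot_iff]
      rintro z hz
      rw [Submodule.mem_inf] at hz
      obtain ⟨hzM, hzD⟩ := hz
      obtain ⟨d, hd, s, hs, hds⟩ := Submodule.mem_sup.1 hzD
      have hdM₁ : d ∈ M₁' := by
        have : d = z - s := by rw [← hds, add_sub_cancel_right]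
        rw [this]
        exact sub_mem (Submodule.mem_sup_left hzM) (Submodule.mem_sup_right hs)
      have hd0 : d = 0 := by
        have : d ∈ M₁' ⊓ D' := Submodule.mem_inf.2 ⟨hdM₁, hd⟩
        rwa [hd3, Submodule.mem_bot] at this
      have : z ∈ M' ⊓ span ℝ {v} :=
        Submodule.mem_inf.2 ⟨hzM, by rw [← hds, hd0, zero_add]; exact hs⟩
      rwa [hdM'v.eq_bot, Submodule.mem_bot] at this
    · calc M' ⊔ (D' ⊔ span ℝ {v}) = (M' ⊔ span ℝ {v}) ⊔ D' := by
            rw [sup_comm D' (span ℝ {v}), ← sup_assoc]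
        _ = M ⊔ M' := by rw [← hM₁'def, hd4, hsupeq]

end Alg
/-- Two finite-dimensional subspaces of the same dimension in any real vector
space have a common (algebraic) complement. -/
lemma exists_common_compl_alg {V : Type*} [AddCommGroup V] [Module ℝ V]
    (M M' : Submodule ℝ V) [FiniteDimensional ℝ M] [FiniteDimensional ℝ M']
    (h : finrank ℝ M = finrank ℝ M') :
    ∃ D : Submodule ℝ V, IsCompl M D ∧ IsCompl M' D := by
  have hle : finrank ℝ M ≤ finrank ℝ ↥(M ⊔ M') :=
    Submodule.finrank_mono (le_sup_left : M ≤ M ⊔ M')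
  obtain ⟨D₀, h1, h2, h3, h4⟩ := exists_common_complement_core
    (finrank ℝ ↥(M ⊔ M') - finrank ℝ M) M M' inferInstance inferInstance h (by omega)
  obtain ⟨C, hC⟩ := Submodule.exists_isCompl (M ⊔ M')
  have hD₀le : D₀ ≤ M ⊔ M' := by rw [← h2]; exact le_sup_right
  have key : ∀ (P : Submodule ℝ V), P ≤ M ⊔ M' → P ⊓ D₀ = ⊥ → P ⊔ D₀ = M ⊔ M' →
      IsCompl P (D₀ ⊔ C) := by
    intro P hPle hPinf hPsup
    constructor
    · rw [disjoint_iff, eq_bot_iff]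
      rintro z hz
      rw [Submodule.mem_inf] at hz
      obtain ⟨hzP, hzD⟩ := hz
      obtain ⟨d, hd, c, hc, hdc⟩ := Submodule.mem_sup.1 hzD
      have hcW : c ∈ M ⊔ M' := by
        have : c = z - d := by rw [← hdc, add_sub_cancel_left]
        rw [this]
        exact sub_mem (hPle hzP) (hD₀le hd)
      have hc0 : c = 0 := Submodule.disjoint_def.1 hC.disjoint c hcW hc
      have : z ∈ P ⊓ D₀ := Submodule.mem_inf.2 ⟨hzP, by rw [← hdc, hc0, add_zero]; exact hd⟩
      rwa [hPinf, Submodule.mem_bot] at this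
    · rw [codisjoint_iff, ← sup_assoc, hPsup]
      exact codisjoint_iff.1 hC.codisjoint
  exact ⟨D₀ ⊔ C, key M le_sup_left h1 h2, key M' le_sup_right h3 h4⟩

/-- Two finite-dimensional subspaces of the same dimension in a real Banach
space have a common *closed* complement. -/
lemma exists_common_closed_compl {E : Type*} [NormedAddCommGroup E] [NormedSpace ℝ E]
    [CompleteSpace E] (M M' : Submodule ℝ E)
    [FiniteDimensional ℝ M] [FiniteDimensional ℝ M']
    (h : finrank ℝ M = finrank ℝ M') :
    ∃ R : Submodule ℝ E, IsClosed (R : Set E) ∧ IsCompl M R ∧ IsCompl M' R := by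
  have hle : finrank ℝ M ≤ finrank ℝ ↥(M ⊔ M') :=
    Submodule.finrank_mono (le_sup_left : M ≤ M ⊔ M')
  obtain ⟨D₀, h1, h2, h3, h4⟩ := exists_common_complement_core
    (finrank ℝ ↥(M ⊔ M') - finrank ℝ M) M M' inferInstance inferInstance h (by omega)
  have hD₀le : D₀ ≤ M ⊔ M' := by rw [← h2]; exact le_sup_right
  haveI : FiniteDimensional ℝ D₀ := Submodule.finiteDimensional_of_le hD₀le
  obtain ⟨f, hf⟩ := Submodule.ClosedComplemented.of_finiteDimensional (M ⊔ M') (𝕜 := ℝ)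
  set P : E →L[ℝ] E := (M ⊔ M').subtypeL.comp f with hPdef
  have hPmem : ∀ x : E, P x ∈ M ⊔ M' := fun x => (f x).2
  have hPW : ∀ x ∈ M ⊔ M', P x = x := by
    intro x hx
    have := hf ⟨x, hx⟩
    simpa [hPdef] using congrArg (Submodule.subtype (M ⊔ M')) this
  set R : Submodule ℝ E := Submodule.comap (P : E →ₗ[ℝ] E) D₀ with hRdef
  have hRclosed : IsClosed (R : Set E) := by
    have : (R : Set E) = ⇑P ⁻¹' (D₀ : Set E) := rfl
    rw [this]
    exact (Submodule.closed_of_finiteDimensional D₀).preimage P.continuous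
  have key : ∀ (Q : Submodule ℝ E), Q ≤ M ⊔ M' → Q ⊓ D₀ = ⊥ → Q ⊔ D₀ = M ⊔ M' →
      IsCompl Q R := by
    intro Q hQle hQinf hQsup
    constructor
    · rw [disjoint_iff, eq_bot_iff]
      rintro z hz
      rw [Submodule.mem_inf] at hz
      obtain ⟨hzQ, hzR⟩ := hz
      have hzD : z ∈ D₀ := by
        have h' := Submodule.mem_comap.1 hzR
        rw [ContinuousLinearMap.coe_coe, hPW z (hQle hzQ)] at h'
        exact h'
      have : z ∈ Q ⊓ D₀ := Submodule.mem_inf.2 ⟨hzQ, hzD⟩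
      rwa [hQinf, Submodule.mem_bot] at this
    · rw [codisjoint_iff, eq_top_iff]
      rintro x -
      have hx : P x ∈ Q ⊔ D₀ := by rw [hQsup]; exact hPmem x
      obtain ⟨a, ha, d, hd, had⟩ := Submodule.mem_sup.1 hx
      have haP : P a = a := hPW a (hQle ha)
      have hr : (x - a) ∈ R := by
        rw [hRdef, Submodule.mem_comap]
        have : P (x - a) = d := by
          rw [map_sub]
          show P x - P a = d
          rw [haP, ← had, add_sub_cancel_left]
        show P (x - a) ∈ D₀
        rw [this]; exact hd
      have : x = a + (x - a) := by abel
      rw [this]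
      exact Submodule.add_mem_sup ha hr
  exact ⟨R, hRclosed, key M le_sup_left h1 h2, key M' le_sup_right h3 h4⟩
/-- Two subspaces of the same finite codimension in any real vector space have a
common finite-dimensional complement. -/
lemma exists_common_findim_compl {V : Type*} [AddCommGroup V] [Module ℝ V]
    (G G' : Submodule ℝ V)
    [FiniteDimensional ℝ (V ⧸ G)] [FiniteDimensional ℝ (V ⧸ G')]
    (h : finrank ℝ (V ⧸ G) = finrank ℝ (V ⧸ G')) :
    ∃ S : Submodule ℝ V, FiniteDimensional ℝ S ∧ IsCompl G S ∧ IsCompl G' S := by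
  set K : Submodule ℝ V := G ⊓ G' with hKdef
  set π : V →ₗ[ℝ] V ⧸ K := K.mkQ with hπdef
  -- V ⧸ K is finite-dimensional
  haveI hQfd : FiniteDimensional ℝ (V ⧸ K) := by
    set φ : V →ₗ[ℝ] (V ⧸ G) × (V ⧸ G') := G.mkQ.prod G'.mkQ with hφdef
    have hkerφ : LinearMap.ker φ = K := by
      rw [hφdef, LinearMap.ker_prod, Submodule.ker_mkQ, Submodule.ker_mkQ]
    have e : (V ⧸ K) ≃ₗ[ℝ] LinearMap.range φ :=
      (Submodule.quotEquivOfEq K (LinearMap.ker φ) hkerφ.symm).trans φ.quotKerEquivRange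
    exact Module.Finite.equiv e.symm
  set Gb : Submodule ℝ (V ⧸ K) := G.map π with hGbdef
  set Gb' : Submodule ℝ (V ⧸ K) := G'.map π with hGb'def
  -- equal finrank of the images
  have eG : ((V ⧸ K) ⧸ Gb) ≃ₗ[ℝ] V ⧸ G :=
    Submodule.quotientQuotientEquivQuotient K G inf_le_left
  have eG' : ((V ⧸ K) ⧸ Gb') ≃ₗ[ℝ] V ⧸ G' :=
    Submodule.quotientQuotientEquivQuotient K G' inf_le_right
  have hrkG : finrank ℝ ((V ⧸ K) ⧸ Gb) + finrank ℝ Gb = finrank ℝ (V ⧸ K) :=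
    Submodule.finrank_quotient_add_finrank Gb
  have hrkG' : finrank ℝ ((V ⧸ K) ⧸ Gb') + finrank ℝ Gb' = finrank ℝ (V ⧸ K) :=
    Submodule.finrank_quotient_add_finrank Gb'
  have hfr : finrank ℝ Gb = finrank ℝ Gb' := by
    have e1 := eG.finrank_eq
    have e2 := eG'.finrank_eq
    omega
  -- common complement upstairs
  haveI : FiniteDimensional ℝ Gb := FiniteDimensional.finiteDimensional_submodule Gb
  haveI : FiniteDimensional ℝ Gb' := FiniteDimensional.finiteDimensional_submodule Gb'
  obtain ⟨Db, hDb, hDb'⟩ := exists_common_compl_alg Gb Gb' hfr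
  -- lift Db along π
  have hπsurj : Function.Surjective π := Submodule.mkQ_surjective K
  obtain ⟨σ, hσ⟩ := Module.projective_lifting_property π Db.subtype hπsurj
  have hσap : ∀ y : Db, π (σ y) = (y : V ⧸ K) := fun y => by
    have := congrArg (fun g => g y) hσ
    simpa using this
  refine ⟨LinearMap.range σ, ?_, ?_, ?_⟩
  · exact Module.Finite.range σ
  · constructor
    · rw [disjoint_iff, eq_bot_iff]
      rintro z hz
      rw [Submodule.mem_inf] at hz
      obtain ⟨hzG, hzS⟩ := hz
      obtain ⟨y, rfl⟩ := hzS
      have h1 : π (σ y) ∈ Gb := Submodule.mem_map_of_mem hzG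
      have h2 : π (σ y) ∈ Db := by rw [hσap y]; exact y.2
      have h0 : π (σ y) = 0 := by
        have := Submodule.mem_inf.2 ⟨h1, h2⟩
        rwa [hDb.inf_eq_bot, Submodule.mem_bot] at this
      have hy : (y : V ⧸ K) = 0 := by rw [← hσap y]; exact h0
      have : y = 0 := Subtype.ext hy
      rw [this, map_zero]
      exact Submodule.zero_mem ⊥
    · rw [codisjoint_iff, eq_top_iff]
      rintro x -
      have hx : π x ∈ Gb ⊔ Db := by rw [hDb.sup_eq_top]; trivial
      obtain ⟨g1, hg1, d, hd, hgd⟩ := Submodule.mem_sup.1 hx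
      obtain ⟨g, hgG, rfl⟩ := hg1
      have hkle : x - g - σ ⟨d, hd⟩ ∈ G := by
        have hker : x - g - σ ⟨d, hd⟩ ∈ LinearMap.ker π := by
          rw [LinearMap.mem_ker, map_sub, map_sub, hσap ⟨d, hd⟩]
          show π x - π g - d = 0
          rw [← hgd]; abel
        rw [hπdef, Submodule.ker_mkQ] at hker
        exact (inf_le_left : K ≤ G) hker
      have : x = (g + (x - g - σ ⟨d, hd⟩)) + σ ⟨d, hd⟩ := by abel
      rw [this]
      exact Submodule.add_mem_sup (Submodule.add_mem G hgG hkle)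
        (LinearMap.mem_range_self σ ⟨d, hd⟩)
  · constructor
    · rw [disjoint_iff, eq_bot_iff]
      rintro z hz
      rw [Submodule.mem_inf] at hz
      obtain ⟨hzG, hzS⟩ := hz
      obtain ⟨y, rfl⟩ := hzS
      have h1 : π (σ y) ∈ Gb' := Submodule.mem_map_of_mem hzG
      have h2 : π (σ y) ∈ Db := by rw [hσap y]; exact y.2
      have h0 : π (σ y) = 0 := by
        have := Submodule.mem_inf.2 ⟨h1, h2⟩
        rwa [hDb'.inf_eq_bot, Submodule.mem_bot] at this
      have hy : (y : V ⧸ K) = 0 := by rw [← hσap y]; exact h0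
      have : y = 0 := Subtype.ext hy
      rw [this, map_zero]
      exact Submodule.zero_mem ⊥
    · rw [codisjoint_iff, eq_top_iff]
      rintro x -
      have hx : π x ∈ Gb' ⊔ Db := by rw [hDb'.sup_eq_top]; trivial
      obtain ⟨g1, hg1, d, hd, hgd⟩ := Submodule.mem_sup.1 hx
      obtain ⟨g, hgG, rfl⟩ := hg1
      have hkle : x - g - σ ⟨d, hd⟩ ∈ G' := by
        have hker : x - g - σ ⟨d, hd⟩ ∈ LinearMap.ker π := by
          rw [LinearMap.mem_ker, map_sub, map_sub, hσap ⟨d, hd⟩]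
          show π x - π g - d = 0
          rw [← hgd]; abel
        rw [hπdef, Submodule.ker_mkQ] at hker
        exact (inf_le_right : K ≤ G') hker
      have : x = (g + (x - g - σ ⟨d, hd⟩)) + σ ⟨d, hd⟩ := by abel
      rw [this]
      exact Submodule.add_mem_sup (Submodule.add_mem G' hgG hkle)
        (LinearMap.mem_range_self σ ⟨d, hd⟩)



variable {E F : Type*}
  [NormedAddCommGroup E] [NormedSpace ℝ E] [CompleteSpace E]
  [NormedAddCommGroup F] [NormedSpace ℝ F] [CompleteSpace F]

/-- An operator `T ∈ B(E,F)` is *double splitting* if its kernel is a closed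
subspace admitting a closed complement in `E`, and its range is a closed
subspace admitting a closed complement in `F`. -/
def IsDoubleSplitting (T : E →L[ℝ] F) : Prop :=
  (∃ R : Submodule ℝ E, IsClosed (R : Set E) ∧ IsCompl (LinearMap.ker (T : E →ₗ[ℝ] F)) R) ∧
  IsClosed (LinearMap.range (T : E →ₗ[ℝ] F) : Set F) ∧
  (∃ S : Submodule ℝ F, IsClosed (S : Set F) ∧ IsCompl (LinearMap.range (T : E →ₗ[ℝ] F)) S)

/-- The *common-complement chain relation* `T₀ ≈ T₁` (Definition 2.1): there
are closed subspaces `N₀ = ker T₀, N₁, …, N_m, N_{m+1} = ker T₁` of `E` with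
common closed complements `R₁, …, R_{m+1}` (`E = N_{i-1} ⊕ R_i = N_i ⊕ R_i`),
and closed subspaces `F₀ = range T₀, F₁, …, F_n, F_{n+1} = range T₁` of `F`
with common closed complements `S₁, …, S_{n+1}`
(`F = F_{j-1} ⊕ S_j = F_j ⊕ S_j`). -/
def ChainRel (T₀ T₁ : E →L[ℝ] F) : Prop :=
  ∃ (m n : ℕ) (N : Fin (m + 2) → Submodule ℝ E) (R : Fin (m + 1) → Submodule ℝ E)
    (G : Fin (n + 2) → Submodule ℝ F) (S : Fin (n + 1) → Submodule ℝ F),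
    (∀ i, IsClosed ((N i : Set E))) ∧ (∀ i, IsClosed ((R i : Set E))) ∧
    (∀ j, IsClosed ((G j : Set F))) ∧ (∀ j, IsClosed ((S j : Set F))) ∧
    N 0 = LinearMap.ker (T₀ : E →ₗ[ℝ] F) ∧ N (Fin.last (m + 1)) = LinearMap.ker (T₁ : E →ₗ[ℝ] F) ∧
    G 0 = LinearMap.range (T₀ : E →ₗ[ℝ] F) ∧ G (Fin.last (n + 1)) = LinearMap.range (T₁ : E →ₗ[ℝ] F) ∧
    (∀ i : Fin (m + 1), IsCompl (N i.castSucc) (R i) ∧ IsCompl (N i.succ) (R i)) ∧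
    (∀ j : Fin (n + 1), IsCompl (G j.castSucc) (S j) ∧ IsCompl (G j.succ) (S j))

/-- **Remark (ii) after Theorem 2.4.**
If `m > 0` or `n > 0` and `T₀ ∈ B(E,F)` has `dim ker T₀ = m` (finite), closed
range and `dim (F / range T₀) = n` (finite), then the equivalence class
`T̃₀ = { T : T double splitting and T₀ ≈ T }` equals `Φ_{m,n}`. -/
theorem equivalence_class_eq_Phi
    (m n : ℕ) (hmn : 0 < m ∨ 0 < n)
    (T₀ : E →L[ℝ] F)
    (hker : FiniteDimensional ℝ (LinearMap.ker (T₀ : E →ₗ[ℝ] F)))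
    (hkerrk : Module.finrank ℝ (LinearMap.ker (T₀ : E →ₗ[ℝ] F)) = m)
    (hrc : IsClosed (LinearMap.range (T₀ : E →ₗ[ℝ] F) : Set F))
    (hcoker : FiniteDimensional ℝ (F ⧸ LinearMap.range (T₀ : E →ₗ[ℝ] F)))
    (hcokerrk : Module.finrank ℝ (F ⧸ LinearMap.range (T₀ : E →ₗ[ℝ] F)) = n) :
    {T : E →L[ℝ] F | IsDoubleSplitting T ∧ ChainRel T₀ T} =
      {T : E →L[ℝ] F | FiniteDimensional ℝ (LinearMap.ker (T : E →ₗ[ℝ] F)) ∧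
        Module.finrank ℝ (LinearMap.ker (T : E →ₗ[ℝ] F)) = m ∧
        IsClosed (LinearMap.range (T : E →ₗ[ℝ] F) : Set F) ∧
        FiniteDimensional ℝ (F ⧸ LinearMap.range (T : E →ₗ[ℝ] F)) ∧
        Module.finrank ℝ (F ⧸ LinearMap.range (T : E →ₗ[ℝ] F)) = n} := by

  ext T
  simp only [Set.mem_setOf_eq]
  constructor
  · rintro ⟨⟨-, hTrange, -⟩,
      m', n', N, R, G, S, hNcl, hRcl, hGcl, hScl, hN0, hNlast, hG0, hGlast, hNR, hGS⟩
    have keyN : ∀ i : Fin (m' + 2),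
        FiniteDimensional ℝ (N i) ∧ finrank ℝ (N i) = m := by
      intro i
      induction i using Fin.induction with
      | zero => rw [hN0]; exact ⟨hker, hkerrk⟩
      | succ i ih =>
        obtain ⟨h1, h2⟩ := hNR i
        have e : (N i.castSucc) ≃ₗ[ℝ] (N i.succ) :=
          ((Submodule.quotientEquivOfIsCompl _ _ h1.symm).symm.trans
            (Submodule.quotientEquivOfIsCompl _ _ h2.symm))
        haveI := ih.1
        exact ⟨Module.Finite.equiv e, e.symm.finrank_eq.trans ih.2⟩
    have keyG : ∀ j : Fin (n' + 2),
        FiniteDimensional ℝ (F ⧸ G j) ∧ finrank ℝ (F ⧸ G j) = n := by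
      intro j
      induction j using Fin.induction with
      | zero => rw [hG0]; exact ⟨hcoker, hcokerrk⟩
      | succ j ih =>
        obtain ⟨h1, h2⟩ := hGS j
        have e : (F ⧸ G j.castSucc) ≃ₗ[ℝ] (F ⧸ G j.succ) :=
          ((Submodule.quotientEquivOfIsCompl _ _ h1).trans
            (Submodule.quotientEquivOfIsCompl _ _ h2).symm)
        haveI := ih.1
        exact ⟨Module.Finite.equiv e, e.symm.finrank_eq.trans ih.2⟩
    have hNlast' := keyN (Fin.last (m' + 1))
    rw [hNlast] at hNlast'
    have hGlast' := keyG (Fin.last (n' + 1))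
    rw [hGlast] at hGlast'
    exact ⟨hNlast'.1, hNlast'.2, hTrange, hGlast'.1, hGlast'.2⟩
  · rintro ⟨h1, h2, h3, h4, h5⟩
    haveI := h1; haveI := hker; haveI := hcoker; haveI := h4
    obtain ⟨R₀, hR₀cl, hR₀₁, hR₀₂⟩ :=
      exists_common_closed_compl (LinearMap.ker (T₀ : E →ₗ[ℝ] F)) (LinearMap.ker (T : E →ₗ[ℝ] F))
        (hkerrk.trans h2.symm)
    obtain ⟨S₀, hS₀fd, hS₀₁, hS₀₂⟩ :=
      exists_common_findim_compl (LinearMap.range (T₀ : E →ₗ[ℝ] F)) (LinearMap.range (T : E →ₗ[ℝ] F))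
        (hcokerrk.trans h5.symm)
    haveI := hS₀fd
    have hS₀cl : IsClosed (S₀ : Set F) := Submodule.closed_of_finiteDimensional S₀
    have hker₀cl : IsClosed ((LinearMap.ker (T₀ : E →ₗ[ℝ] F) : Submodule ℝ E) : Set E) :=
      ContinuousLinearMap.isClosed_ker T₀
    have hkercl : IsClosed ((LinearMap.ker (T : E →ₗ[ℝ] F) : Submodule ℝ E) : Set E) :=
      ContinuousLinearMap.isClosed_ker T
    refine ⟨⟨⟨R₀, hR₀cl, hR₀₂⟩, h3, ⟨S₀, hS₀cl, hS₀₂⟩⟩,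
      0, 0, ![LinearMap.ker (T₀ : E →ₗ[ℝ] F), LinearMap.ker (T : E →ₗ[ℝ] F)], ![R₀],
      ![LinearMap.range (T₀ : E →ₗ[ℝ] F), LinearMap.range (T : E →ₗ[ℝ] F)], ![S₀], ?_, ?_, ?_, ?_, ?_, ?_, ?_, ?_, ?_, ?_⟩
    · intro i; fin_cases i
      · exact hker₀cl
      · exact hkercl
    · intro i; fin_cases i; exact hR₀cl
    · intro j; fin_cases j
      · exact hrc
      · exact h3
    · intro j; fin_cases j; exact hS₀cl
    · rfl
    · rfl
    · rfl
    · rfl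
    · intro i; fin_cases i
      exact ⟨hR₀₁, hR₀₂⟩
    · intro j; fin_cases j
      exact ⟨hS₀₁, hS₀₂⟩
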